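/- Let H be the Hilbert space ℓ² of square-summable complex sequences indexed by ℕ, with truncation projections P_n, and let K : H → H be a compact continuous linear operator such that I + K is bijective. Then there exists N ∈ ℕ such that for every n ≥ N and every g ∈ H there is a unique u_n ∈ H with P_n u_n = u_n and P_n(u_n + K u_n) = P_n g; moreover, for each fixed g ∈ H these finite-section solutions u_n converge in norm to the unique solution u of u + K u = g as n → ∞. -/

import Mathlib

noncomputable section FSM
open Filter Topology Metric ENNReal

local notation "ℋ" => lp (fun _ : ℕ => ℂ) 2

lemma fsm_norm_sq (f : ℋ) : ‖f‖ ^ (2:ℝ) = ∑' k, ‖f k‖ ^ (2:ℝ) := by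
  have h : (0:ℝ) < (2 : ℝ≥0∞).toReal := by norm_num
  simpa using lp.norm_rpow_eq_tsum h f

lemma fsm_summable (f : ℋ) : Summable fun k => ‖f k‖ ^ (2:ℝ) :=
  (lp.memℓp f).summable (by norm_num)

lemma fsm_norm_le (f g : ℋ) (h : ∀ k, ‖f k‖ ≤ ‖g k‖) : ‖f‖ ≤ ‖g‖ := by
  have h2 : ‖f‖ ^ (2:ℝ) ≤ ‖g‖ ^ (2:ℝ) := by
    rw [fsm_norm_sq, fsm_norm_sq]
    refine Summable.tsum_le_tsum (fun k => ?_) (fsm_summable f) (fsm_summable g)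
    exact Real.rpow_le_rpow (norm_nonneg _) (h k) (by norm_num)
  rw [show (2:ℝ) = ((2:ℕ):ℝ) by norm_num, Real.rpow_natCast, Real.rpow_natCast] at h2
  exact (pow_le_pow_iff_left₀ (norm_nonneg f) (norm_nonneg g) (by norm_num)).mp h2

lemma fsm_tail_tendsto (a : ℕ → ℝ) (ha : Summable a) (hpos : ∀ k, 0 ≤ a k) :
    Tendsto (fun n => ∑' k, if k < n then 0 else a k) atTop (𝓝 0) := by
  have key : ∀ n, (∑ k ∈ Finset.range n, a k) + (∑' k, if k < n then 0 else a k) = ∑' k, a k := by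
    intro n
    have h1 : Summable (fun k => if k < n then a k else 0) := by
      refine ha.of_nonneg_of_le (fun k => by split <;> simp [hpos k]) (fun k => ?_)
      split <;> simp [hpos k]
    have h2 : Summable (fun k => if k < n then 0 else a k) := by
      refine ha.of_nonneg_of_le (fun k => by split <;> simp [hpos k]) (fun k => ?_)
      split <;> simp [hpos k]
    have e1 : (∑ k ∈ Finset.range n, a k) = ∑' k, if k < n then a k else 0 := by
      rw [tsum_eq_sum (s := Finset.range n) (fun b hb => by
        simp [Finset.mem_range] at hb; simp [hb])]
      exact Finset.sum_congr rfl (fun k hk => by simp [Finset.mem_range] at hk; simp [hk])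
    rw [e1, ← Summable.tsum_add h1 h2]
    congr 1; ext k; split <;> simp
  have hpartial : Tendsto (fun n => ∑ k ∈ Finset.range n, a k) atTop (𝓝 (∑' k, a k)) :=
    ha.hasSum.tendsto_sum_nat
  have : Tendsto (fun n => (∑' k, a k) - ∑ k ∈ Finset.range n, a k) atTop
      (𝓝 ((∑' k, a k) - ∑' k, a k)) := tendsto_const_nhds.sub hpartial
  simp only [sub_self] at this
  refine this.congr (fun n => ?_)
  have := key n; linarith

section Pfacts
variable (P : ℕ → (ℋ →L[ℂ] ℋ))
  (hP : ∀ (n : ℕ) (u : ℋ) (k : ℕ), (P n u) k = if k < n then u k else 0)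
include hP

lemma fsm_sub_coe (n : ℕ) (u : ℋ) (k : ℕ) :
    (u - P n u : ℋ) k = if k < n then 0 else u k := by
  have : (u - P n u : ℋ) k = u k - (P n u) k := by
    rw [lp.coeFn_sub]; simp
  rw [this, hP]; split <;> simp

lemma fsm_Pnorm_le (n : ℕ) (u : ℋ) : ‖P n u‖ ≤ ‖u‖ := by
  refine fsm_norm_le _ _ (fun k => ?_)
  rw [hP]; split <;> simp

lemma fsm_sub_norm_le (n : ℕ) (u : ℋ) : ‖u - P n u‖ ≤ ‖u‖ := by
  refine fsm_norm_le _ _ (fun k => ?_)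
  rw [fsm_sub_coe P hP]; split <;> simp

lemma fsm_idem (n : ℕ) (u : ℋ) : P n (P n u) = P n u := by
  ext k
  rw [hP, hP]
  split <;> simp_all

lemma fsm_P_tendsto (u : ℋ) : Tendsto (fun n => ‖u - P n u‖) atTop (𝓝 0) := by
  have hsq : ∀ n, ‖u - P n u‖ ^ (2:ℝ) = ∑' k, if k < n then 0 else ‖u k‖ ^ (2:ℝ) := by
    intro n
    rw [fsm_norm_sq]
    congr 1; ext k
    rw [fsm_sub_coe P hP]
    split <;> simp [Real.zero_rpow]
  have h0 := fsm_tail_tendsto (fun k => ‖u k‖ ^ (2:ℝ)) (fsm_summable u) (fun k => by positivity)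
  have h1 : Tendsto (fun n => ‖u - P n u‖ ^ (2:ℝ)) atTop (𝓝 0) := by
    simpa only [← hsq] using h0
  have h2 : Tendsto (fun n => Real.sqrt (‖u - P n u‖ ^ (2:ℝ))) atTop (𝓝 (Real.sqrt 0)) :=
    (Real.continuous_sqrt.tendsto _).comp h1
  simp only [Real.sqrt_zero] at h2
  refine h2.congr (fun n => ?_)
  rw [show (2:ℝ) = ((2:ℕ):ℝ) by norm_num, Real.rpow_natCast, Real.sqrt_sq (norm_nonneg _)]

end Pfacts

lemma fsm_approx (P : ℕ → (ℋ →L[ℂ] ℋ))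
    (hP : ∀ (n : ℕ) (u : ℋ) (k : ℕ), (P n u) k = if k < n then u k else 0)
    (n : ℕ) (ε : ℝ) (z y : ℋ) (h2 : ‖z - y‖ < ε/2) (hn : ‖y - P n y‖ < ε/2) :
    ‖z - P n z‖ ≤ ε := by
  have h1 : ‖(z - y) - P n (z - y)‖ ≤ ‖z - y‖ := fsm_sub_norm_le P hP n _
  have he : z - P n z = ((z - y) - P n (z - y)) + (y - P n y) := by
    rw [map_sub]; abel
  rw [he]
  calc ‖((z - y) - P n (z - y)) + (y - P n y)‖
      ≤ ‖(z - y) - P n (z - y)‖ + ‖y - P n y‖ := norm_add_le _ _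
    _ ≤ ε := by linarith

set_option maxHeartbeats 1000000 in
lemma fsm_compact_opnorm (P : ℕ → (ℋ →L[ℂ] ℋ))
    (hP : ∀ (n : ℕ) (u : ℋ) (k : ℕ), (P n u) k = if k < n then u k else 0)
    (K : ℋ →L[ℂ] ℋ) (hK : IsCompactOperator K) {ε : ℝ} (hε : 0 < ε) :
    ∀ᶠ n in atTop, ∀ v : ℋ, ‖K v - P n (K v)‖ ≤ ε * ‖v‖ := by
  obtain ⟨C, hC, hsub⟩ :=
    (hK.image_closedBall_subset_compact (𝕜₁ := ℂ) (f := (K : ℋ →ₗ[ℂ] ℋ)) 1)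
  obtain ⟨t, -, htfin, htcov⟩ := hC.finite_cover_balls (e := ε / 2) (by positivity)
  have hnet : ∀ᶠ n in atTop, ∀ y ∈ t, ‖y - P n y‖ < ε / 2 := by
    rw [eventually_all_finite htfin]
    intro y _
    have := fsm_P_tendsto P hP y
    exact this.eventually (Filter.Tendsto.eventually_lt_const (by positivity) tendsto_id)
  filter_upwards [hnet] with n hn v
  rcases eq_or_ne v 0 with rfl | hv
  · simp
  · -- normalize
    have hvn : (0:ℝ) < ‖v‖ := norm_pos_iff.mpr hv
    set w : ℋ := (‖v‖ : ℂ)⁻¹ • v with hw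
    have hwnorm : ‖w‖ ≤ 1 := by
      rw [hw, norm_smul]
      simp [norm_inv, abs_of_nonneg hvn.le]
      rw [inv_mul_le_iff₀ hvn] <;> simp
    have hw1 : w ∈ Metric.closedBall (0:ℋ) 1 := by rwa [mem_closedBall_zero_iff]
    have hmem : K w ∈ C := hsub ⟨w, hw1, rfl⟩
    obtain ⟨y, hyt, hy⟩ : ∃ y ∈ t, K w ∈ Metric.ball y (ε/2) := by
      simpa using htcov hmem
    have hKw : ‖K w - P n (K w)‖ ≤ ε := by
      refine fsm_approx P hP n ε (K w) y ?_ (hn y hyt)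
      rw [Metric.mem_ball, dist_eq_norm] at hy
      exact hy
    -- scale back
    have hscale : K v - P n (K v) = (‖v‖ : ℂ) • (K w - P n (K w)) := by
      rw [smul_sub, hw, map_smul, map_smul, smul_smul, smul_smul,
        mul_inv_cancel₀ (by exact_mod_cast hvn.ne'), one_smul, one_smul]
    rw [hscale, norm_smul, Complex.norm_real, Real.norm_of_nonneg hvn.le]
    calc ‖v‖ * ‖K w - P n (K w)‖ ≤ ‖v‖ * ε := mul_le_mul_of_nonneg_left hKw hvn.le
      _ = ε * ‖v‖ := mul_comm _ _

set_option maxHeartbeats 2000000 in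
theorem finite_section_method_second_kind
    (P : ℕ → (lp (fun _ : ℕ => ℂ) 2 →L[ℂ] lp (fun _ : ℕ => ℂ) 2))
    (hP : ∀ (n : ℕ) (u : lp (fun _ : ℕ => ℂ) 2) (k : ℕ),
      (P n u) k = if k < n then u k else 0)
    (K : lp (fun _ : ℕ => ℂ) 2 →L[ℂ] lp (fun _ : ℕ => ℂ) 2)
    (hK : IsCompactOperator K)
    (hbij : Function.Bijective (fun u : lp (fun _ : ℕ => ℂ) 2 => u + K u)) :
    ∃ N : ℕ,
      (∀ n, N ≤ n → ∀ g : lp (fun _ : ℕ => ℂ) 2,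
        ∃! un : lp (fun _ : ℕ => ℂ) 2, P n un = un ∧ P n (un + K un) = P n g) ∧
      (∀ g u : lp (fun _ : ℕ => ℂ) 2, u + K u = g →
        ∀ v : ℕ → lp (fun _ : ℕ => ℂ) 2,
          (∀ n, N ≤ n → P n (v n) = v n ∧ P n (v n + K (v n)) = P n g) →
          Filter.Tendsto v Filter.atTop (nhds u)) := by
  classical
  set T : ℋ →L[ℂ] ℋ := 1 + K with hTdef
  have hT : ∀ u : ℋ, T u = u + K u := fun u => by
    simp [hTdef, ContinuousLinearMap.add_apply]
  have hTbij : Function.Bijective ⇑T := by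
    have : ⇑T = fun u : ℋ => u + K u := funext hT
    rw [this]; exact hbij
  let e : ℋ ≃L[ℂ] ℋ := ContinuousLinearEquiv.ofBijective T
    (LinearMap.ker_eq_bot.mpr hTbij.injective)
    (LinearMap.range_eq_top.mpr hTbij.surjective)
  have he : ∀ x : ℋ, e x = T x := fun x =>
    congrFun (ContinuousLinearEquiv.coeFn_ofBijective T _ _) x
  have hesymm : ∀ v : ℋ, e.symm (T v) = v := fun v =>
    ContinuousLinearEquiv.ofBijective_symm_apply_apply T _ _ v
  set M : ℝ := ‖(e.symm : ℋ →L[ℂ] ℋ)‖ with hMdef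
  have hM : 0 ≤ M := norm_nonneg _
  have hM1 : (0:ℝ) < M + 1 := by linarith
  have hTv : ∀ v : ℋ, ‖v‖ ≤ (M + 1) * ‖T v‖ := by
    intro v
    have h1 : ‖(e.symm : ℋ →L[ℂ] ℋ) (T v)‖ ≤ M * ‖T v‖ :=
      (e.symm : ℋ →L[ℂ] ℋ).le_opNorm (T v)
    have h2 : (e.symm : ℋ →L[ℂ] ℋ) (T v) = v := by
      rw [ContinuousLinearEquiv.coe_coe]; exact hesymm v
    rw [h2] at h1
    nlinarith [norm_nonneg (T v)]
  set ε₀ : ℝ := (2 * (M + 1))⁻¹ with hε₀def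
  have hε₀pos : 0 < ε₀ := by rw [hε₀def]; positivity
  obtain ⟨N, hN⟩ := Filter.eventually_atTop.mp (fsm_compact_opnorm P hP K hK hε₀pos)
  set B : ℕ → (ℋ →L[ℂ] ℋ) := fun n => 1 + (P n).comp K with hBdef
  have hB : ∀ (n : ℕ) (v : ℋ), B n v = v + P n (K v) := fun n v => by
    simp [hBdef, ContinuousLinearMap.add_apply]
  have hTBv : ∀ (n : ℕ) (v : ℋ), (T - B n) v = K v - P n (K v) := by
    intro n v
    rw [ContinuousLinearMap.sub_apply, hT, hB]
    abel
  have key : ∀ n, N ≤ n → Function.Bijective ⇑(B n) ∧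
      ∀ v : ℋ, ‖v‖ ≤ (2 * (M + 1)) * ‖B n v‖ := by
    intro n hn
    have hTB : ‖T - B n‖ ≤ ε₀ := by
      refine ContinuousLinearMap.opNorm_le_bound _ hε₀pos.le (fun v => ?_)
      rw [hTBv n v]
      exact hN n hn v
    have hval_inv : T * (e.symm : ℋ →L[ℂ] ℋ) = 1 := by
      refine ContinuousLinearMap.ext fun x => ?_
      rw [ContinuousLinearMap.mul_apply, ContinuousLinearMap.one_apply,
        ContinuousLinearEquiv.coe_coe, ← he]
      exact e.apply_symm_apply x
    have hinv_val : (e.symm : ℋ →L[ℂ] ℋ) * T = 1 := by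
      refine ContinuousLinearMap.ext fun x => ?_
      rw [ContinuousLinearMap.mul_apply, ContinuousLinearMap.one_apply,
        ContinuousLinearEquiv.coe_coe]
      exact hesymm x
    set uT : (ℋ →L[ℂ] ℋ)ˣ := ⟨T, (e.symm : ℋ →L[ℂ] ℋ), hval_inv, hinv_val⟩ with huT
    set t : ℋ →L[ℂ] ℋ := (e.symm : ℋ →L[ℂ] ℋ) * (T - B n) with htdef
    have ht : ‖t‖ < 1 := by
      calc ‖t‖ ≤ M * ‖T - B n‖ := norm_mul_le _ _
        _ ≤ M * ε₀ := mul_le_mul_of_nonneg_left hTB hM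
        _ < 1 := by
            rw [hε₀def, ← div_eq_mul_inv, div_lt_one (by linarith)]
            linarith
    set U : (ℋ →L[ℂ] ℋ)ˣ := uT * Units.oneSub t ht with hUdef
    have hU : (U : ℋ →L[ℂ] ℋ) = B n := by
      rw [hUdef, Units.val_mul, Units.val_oneSub, huT]
      show T * (1 - t) = B n
      rw [htdef, mul_sub, mul_one, ← mul_assoc, hval_inv, one_mul]
      abel
    have hbijn : Function.Bijective ⇑(B n) := by
      refine Function.bijective_iff_has_inverse.mpr ⟨⇑((U⁻¹ : (ℋ →L[ℂ] ℋ)ˣ) : ℋ →L[ℂ] ℋ),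
        fun x => ?_, fun x => ?_⟩
      · rw [← hU, ← ContinuousLinearMap.mul_apply, U.inv_mul, ContinuousLinearMap.one_apply]
      · rw [← hU, ← ContinuousLinearMap.mul_apply, U.mul_inv, ContinuousLinearMap.one_apply]
    refine ⟨hbijn, fun v => ?_⟩
    have h1 : ‖v‖ ≤ (M + 1) * ‖T v‖ := hTv v
    have h2 : ‖T v‖ ≤ ‖B n v‖ + ε₀ * ‖v‖ := by
      calc ‖T v‖ = ‖B n v + (T - B n) v‖ := by
            rw [ContinuousLinearMap.sub_apply]; congr 1; abel
        _ ≤ ‖B n v‖ + ‖(T - B n) v‖ := norm_add_le _ _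
        _ ≤ ‖B n v‖ + ε₀ * ‖v‖ := by
            have := hN n hn v; rw [hTBv n v]; linarith
    have heq : (M + 1) * ε₀ = 1 / 2 := by
      rw [hε₀def]; field_simp
    have h3 : ‖v‖ ≤ (M + 1) * ‖B n v‖ + (M + 1) * (ε₀ * ‖v‖) := by
      calc ‖v‖ ≤ (M + 1) * ‖T v‖ := h1
        _ ≤ (M + 1) * (‖B n v‖ + ε₀ * ‖v‖) := mul_le_mul_of_nonneg_left h2 hM1.le
        _ = (M + 1) * ‖B n v‖ + (M + 1) * (ε₀ * ‖v‖) := by ring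
    have h4 : (M + 1) * (ε₀ * ‖v‖) = ‖v‖ / 2 := by
      rw [← mul_assoc, heq]; ring
    rw [h4] at h3
    linarith
  refine ⟨N, ?_, ?_⟩
  · intro n hn g
    obtain ⟨hbijn, -⟩ := key n hn
    obtain ⟨un, hun⟩ := hbijn.surjective (P n g)
    have hun' : un + P n (K un) = P n g := by rw [← hB]; exact hun
    have h3 : un = P n g - P n (K un) := eq_sub_of_add_eq hun'
    have hP1 : P n un = un := by
      conv_lhs => rw [h3]
      rw [map_sub, fsm_idem P hP, fsm_idem P hP, ← h3]
    have hP2 : P n (un + K un) = P n g := by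
      rw [map_add, hP1, hun']
    refine ⟨un, ⟨hP1, hP2⟩, fun w hw => ?_⟩
    obtain ⟨hw1, hw2⟩ := hw
    refine hbijn.injective ?_
    rw [hun, hB]
    calc w + P n (K w) = P n w + P n (K w) := by rw [hw1]
      _ = P n (w + K w) := (map_add _ _ _).symm
      _ = P n g := hw2
  · intro g u hu v hv
    rw [tendsto_iff_norm_sub_tendsto_zero]
    have hlim : Filter.Tendsto (fun n => (2 * (M + 1)) * ‖u - P n u‖)
        Filter.atTop (𝓝 0) := by
      have := (fsm_P_tendsto P hP u).const_mul (2 * (M + 1))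
      simpa using this
    refine squeeze_zero' (Filter.Eventually.of_forall fun n => norm_nonneg _) ?_ hlim
    filter_upwards [Filter.eventually_ge_atTop N] with n hn
    obtain ⟨-, hlow⟩ := key n hn
    obtain ⟨hv1, hv2⟩ := hv n hn
    have hBv : B n (v n) = P n g := by
      rw [hB]
      calc v n + P n (K (v n)) = P n (v n) + P n (K (v n)) := by rw [hv1]
        _ = P n (v n + K (v n)) := (map_add _ _ _).symm
        _ = P n g := hv2
    have hBu : B n (v n - u) = P n u - u := by
      rw [map_sub, hBv, hB]
      have : P n g = P n u + P n (K u) := by rw [← map_add, hu]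
      rw [this]
      abel
    have h5 := hlow (v n - u)
    rw [hBu] at h5
    calc ‖v n - u‖ ≤ 2 * (M + 1) * ‖P n u - u‖ := h5
      _ = 2 * (M + 1) * ‖u - P n u‖ := by rw [norm_sub_rev]

end FSM
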